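/- Fix k ≥ 1. The Tychonoff solution u_k(x,t) = Σ_{n=0}^∞ (f_k^{(n)}(t)/(2n)!) x^{2n}, with f_k(t) = exp(-t^{-2k}), converges to 0 in the sense of distributions on ℝ as t → 0⁺; more concretely, for every compactly supported continuous test function φ, ∫_ℝ u_k(x,t) φ(x) dx → 0 as t → 0⁺. -/

import Mathlib

set_option maxHeartbeats 1000000

open Complex Metric Filter MeasureTheory

noncomputable def Fc (k : ℕ) : ℂ → ℂ := fun z => Complex.exp (-1 / z ^ (2 * k))

lemma Fc_diffAt (k : ℕ) {z : ℂ} (hz : z ≠ 0) : DifferentiableAt ℂ (Fc k) z := by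
  have : DifferentiableAt ℂ (fun z : ℂ => -1 / z ^ (2 * k)) z :=
    (differentiableAt_const (-1)).div (differentiableAt_pow _) (pow_ne_zero _ hz)
  exact this.cexp

lemma Fc_iter_analytic (k n : ℕ) :
    AnalyticOnNhd ℂ (iteratedDeriv n (Fc k)) {z : ℂ | z ≠ 0} := by
  induction n with
  | zero =>
    simpa only [iteratedDeriv_zero] using
      (DifferentiableOn.analyticOnNhd (s := {z : ℂ | z ≠ 0})
        (fun z hz => (Fc_diffAt k hz).differentiableWithinAt) isOpen_ne)
  | succ n ih =>
    simpa [iteratedDeriv_succ] using ih.deriv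

lemma real_eq (k : ℕ) (n : ℕ) : ∀ t : ℝ, 0 < t →
    iteratedDeriv n (fun s : ℝ => Real.exp (-1 / s ^ (2 * k))) t
      = (iteratedDeriv n (Fc k) t).re := by
  induction n with
  | zero =>
    intro t ht
    simp only [iteratedDeriv_zero, Fc]
    rw [show ((-1 : ℂ) / (t : ℂ) ^ (2 * k)) = ((-1 / t ^ (2 * k) : ℝ) : ℂ) by push_cast; ring,
      ← Complex.ofReal_exp, Complex.ofReal_re]
  | succ n ih =>
    intro t ht
    rw [iteratedDeriv_succ, iteratedDeriv_succ]
    have hev : (fun s : ℝ => iteratedDeriv n (fun s : ℝ => Real.exp (-1 / s ^ (2 * k))) s)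
        =ᶠ[nhds t] fun s : ℝ => (iteratedDeriv n (Fc k) s).re := by
      filter_upwards [Ioi_mem_nhds ht] with s hs using ih s hs
    rw [hev.deriv_eq]
    have hd : HasDerivAt (iteratedDeriv n (Fc k)) (deriv (iteratedDeriv n (Fc k)) (t : ℂ)) t :=
      ((Fc_iter_analytic k n (t : ℂ) (by simp [Set.mem_setOf_eq, Complex.ofReal_ne_zero]; exact ht.ne')).differentiableAt).hasDerivAt
    exact hd.real_of_complex.deriv

lemma cauchy_est {f : ℂ → ℂ} {c : ℂ} {r M : ℝ} (hr : 0 < r)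
    (hd : DifferentiableOn ℂ f (closedBall c r)) (hM : 0 ≤ M)
    (hb : ∀ z ∈ sphere c r, ‖f z‖ ≤ M) (n : ℕ) :
    ‖iteratedDeriv n f c‖ ≤ n.factorial * M / r ^ n := by
  set R : NNReal := ⟨r, hr.le⟩ with hR
  have hRr : (R : ℝ) = r := rfl
  have h : HasFPowerSeriesOnBall f (cauchyPowerSeries f c R) c R :=
    DifferentiableOn.hasFPowerSeriesOnBall (by rw [hRr]; exact hd) (by rw [← NNReal.coe_pos, hRr]; exact hr)
  have key : iteratedDeriv n f c = n.factorial • (cauchyPowerSeries f c R n fun _ => (1 : ℂ)) := by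
    rw [iteratedDeriv_eq_iteratedFDeriv]
    exact (h.factorial_smul 1 n).symm
  have hcont : Continuous fun θ : ℝ => ‖f (circleMap c r θ)‖ := by
    refine Continuous.norm ?_
    exact hd.continuousOn.comp_continuous (continuous_circleMap c r)
      (fun θ => sphere_subset_closedBall (circleMap_mem_sphere c hr.le θ))
  have hint : (∫ θ in (0:ℝ)..2 * Real.pi, ‖f (circleMap c r θ)‖) ≤ 2 * Real.pi * M := by
    have h2 := intervalIntegral.integral_mono_on (a := (0:ℝ)) (b := 2 * Real.pi)
      (f := fun θ => ‖f (circleMap c r θ)‖) (g := fun _ => M)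
      (μ := MeasureTheory.volume) (by positivity) (hcont.intervalIntegrable _ _) intervalIntegrable_const
      (fun θ _ => hb _ (circleMap_mem_sphere c hr.le θ))
    simpa [mul_comm] using h2
  have hple : ‖cauchyPowerSeries f c R n fun _ => (1:ℂ)‖ ≤ M * (r ^ n)⁻¹ := by
    have h1 : ‖cauchyPowerSeries f c R n fun _ => (1:ℂ)‖ ≤ ‖cauchyPowerSeries f c R n‖ := by
      simpa using (cauchyPowerSeries f c R n).le_opNorm fun _ => (1:ℂ)
    refine h1.trans ((norm_cauchyPowerSeries_le f c R n).trans ?_)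
    have hπ : (0:ℝ) < 2 * Real.pi := by positivity
    have : (2 * Real.pi)⁻¹ * ∫ θ in (0:ℝ)..2 * Real.pi, ‖f (circleMap c (R:ℝ) θ)‖ ≤ M := by
      rw [inv_mul_le_iff₀ hπ]
      simpa [hRr] using hint
    have habs : |(R:ℝ)|⁻¹ ^ n = (r ^ n)⁻¹ := by
      rw [hRr, abs_of_pos hr, inv_pow]
    rw [habs]
    exact mul_le_mul_of_nonneg_right this (by positivity)
  calc ‖iteratedDeriv n f c‖ = n.factorial * ‖cauchyPowerSeries f c R n fun _ => (1:ℂ)‖ := by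
        rw [key, nsmul_eq_mul, norm_mul, Complex.norm_natCast]
    _ ≤ n.factorial * (M * (r ^ n)⁻¹) := by
        exact mul_le_mul_of_nonneg_left hple (by positivity)
    _ = n.factorial * M / r ^ n := by ring

lemma exists_eps (k : ℕ) : ∃ ε : ℝ, 0 < ε ∧ ε < 1 ∧
    ∀ w : ℂ, ‖w - 1‖ ≤ ε → (1/2 : ℝ) ≤ ((w ^ (2 * k))⁻¹).re := by
  have hc : ContinuousAt (fun w : ℂ => ((w ^ (2 * k))⁻¹).re) 1 := by
    apply Complex.continuous_re.continuousAt.comp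
    exact ((continuous_pow (2 * k)).continuousAt).inv₀ (by simp)
  rw [Metric.continuousAt_iff] at hc
  obtain ⟨δ, hδ, h⟩ := hc (1/2) (by norm_num)
  refine ⟨min (δ/2) (1/2), by positivity, ?_, ?_⟩
  · exact lt_of_le_of_lt (min_le_right _ _) (by norm_num)
  · intro w hw
    have hd : dist w 1 < δ := by
      have : ‖w - 1‖ ≤ δ/2 := hw.trans (min_le_left _ _)
      rw [Complex.dist_eq]
      exact lt_of_le_of_lt this (half_lt_self hδ)
    have h2 := h hd
    have hval : ((1:ℂ) ^ (2*k))⁻¹.re = 1 := by simp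
    rw [Real.dist_eq, hval] at h2
    have := abs_lt.mp h2
    linarith [this.1]

lemma sphere_bound (k : ℕ) {ε : ℝ} (hε : 0 < ε) (hε1 : ε < 1)
    (hE : ∀ w : ℂ, ‖w - 1‖ ≤ ε → (1/2 : ℝ) ≤ ((w ^ (2 * k))⁻¹).re)
    {t : ℝ} (ht : 0 < t) {z : ℂ} (hz : z ∈ sphere (t : ℂ) (ε * t)) :
    ‖Complex.exp (-1 / z ^ (2 * k))‖ ≤ Real.exp (-(1/2) * (t ^ (2 * k))⁻¹) := by
  have ht0 : (t : ℂ) ≠ 0 := by simpa using ht.ne'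
  set w : ℂ := z / t with hwdef
  have hw : ‖w - 1‖ = ε := by
    rw [mem_sphere_iff_norm] at hz
    have : w - 1 = (z - t) / t := by rw [hwdef, sub_div, div_self ht0]
    rw [this, norm_div, hz]
    simp [Complex.norm_real, abs_of_pos ht]
    field_simp
  have h2 := hE w hw.le
  have hw0 : w ≠ 0 := by
    intro h0
    rw [h0] at hw
    simp at hw
    linarith
  have hzw : z = t * w := by rw [hwdef]; exact (mul_div_cancel₀ z ht0).symm
  rw [hzw, Complex.norm_exp]
  apply Real.exp_le_exp.mpr
  have hrw : (-1 / ((t:ℂ) * w) ^ (2 * k)) = -(((t ^ (2*k) : ℝ))⁻¹ : ℂ) * (w ^ (2*k))⁻¹ := by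
    have htp : ((t:ℂ)) ^ (2*k) ≠ 0 := pow_ne_zero _ ht0
    have hwp : w ^ (2*k) ≠ 0 := pow_ne_zero _ hw0
    push_cast
    field_simp
    ring
  rw [hrw]
  have hcast : (-(((t ^ (2*k) : ℝ) : ℂ))⁻¹ * (w ^ (2*k))⁻¹)
      = (((-(t ^ (2*k))⁻¹ : ℝ)) : ℂ) * (w ^ (2*k))⁻¹ := by push_cast; ring
  rw [hcast, Complex.re_ofReal_mul]
  have htp : (0:ℝ) < (t ^ (2*k))⁻¹ := by positivity
  nlinarith

lemma deriv_bound (k : ℕ) {ε : ℝ} (hε : 0 < ε) (hε1 : ε < 1)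
    (hE : ∀ w : ℂ, ‖w - 1‖ ≤ ε → (1/2 : ℝ) ≤ ((w ^ (2 * k))⁻¹).re)
    {t : ℝ} (ht : 0 < t) (n : ℕ) :
    ‖iteratedDeriv n (Fc k) t‖
      ≤ n.factorial * Real.exp (-(1/2) * (t ^ (2 * k))⁻¹) / (ε * t) ^ n := by
  apply cauchy_est (by positivity) ?_ (Real.exp_nonneg _)
    (fun z hz => by simpa [Fc] using sphere_bound k hε hε1 hE ht hz) n
  intro z hz
  refine (Fc_diffAt k ?_).differentiableWithinAt
  intro h0
  rw [mem_closedBall, h0, dist_eq_norm, zero_sub, norm_neg] at hz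
  rw [Complex.norm_real, Real.norm_eq_abs, abs_of_pos ht] at hz
  nlinarith

lemma real_deriv_bound (k : ℕ) {ε : ℝ} (hε : 0 < ε) (hε1 : ε < 1)
    (hE : ∀ w : ℂ, ‖w - 1‖ ≤ ε → (1/2 : ℝ) ≤ ((w ^ (2 * k))⁻¹).re)
    {t : ℝ} (ht : 0 < t) (n : ℕ) :
    |iteratedDeriv n (fun s : ℝ => Real.exp (-1 / s ^ (2 * k))) t|
      ≤ n.factorial * Real.exp (-(1/2) * (t ^ (2 * k))⁻¹) / (ε * t) ^ n := by
  rw [real_eq k n t ht]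
  refine le_trans (Complex.abs_re_le_norm _) ?_
  simpa using deriv_bound k hε hε1 hE ht n

lemma u_bound (k : ℕ) {ε : ℝ} (hε : 0 < ε) (hε1 : ε < 1)
    (hE : ∀ w : ℂ, ‖w - 1‖ ≤ ε → (1/2 : ℝ) ≤ ((w ^ (2 * k))⁻¹).re)
    {t : ℝ} (ht : 0 < t) (x : ℝ) :
    |∑' n : ℕ, iteratedDeriv n (fun s : ℝ => Real.exp (-1 / s ^ (2 * k))) t
        / (((2 * n).factorial : ℝ)) * x ^ (2 * n)|
      ≤ Real.exp (x ^ 2 / (ε * t)) * Real.exp (-(1/2) * (t ^ (2 * k))⁻¹) := by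
  set a : ℝ := x ^ 2 / (ε * t) with ha
  have ha0 : 0 ≤ a := by positivity
  set M := Real.exp (-(1/2) * (t ^ (2 * k))⁻¹) with hMdef
  have hM0 : 0 ≤ M := Real.exp_nonneg _
  set term : ℕ → ℝ := fun n => iteratedDeriv n (fun s : ℝ => Real.exp (-1 / s ^ (2 * k))) t
      / (((2 * n).factorial : ℝ)) * x ^ (2 * n) with hterm_def
  have hterm : ∀ n : ℕ, |term n| ≤ a ^ n / n.factorial * M := by
    intro n
    have h2 : (0:ℝ) < (n.factorial : ℝ) := by exact_mod_cast Nat.factorial_pos n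
    have h3 : (0:ℝ) < ((2 * n).factorial : ℝ) := by exact_mod_cast Nat.factorial_pos _
    have hfact : (n.factorial : ℝ) * n.factorial ≤ ((2 * n).factorial : ℝ) := by
      have := Nat.le_of_dvd (Nat.factorial_pos (n + n))
        (Nat.factorial_mul_factorial_dvd_factorial_add n n)
      rw [two_mul]
      exact_mod_cast this
    have hkey : (n.factorial : ℝ) / (2 * n).factorial ≤ 1 / n.factorial := by
      rw [div_le_div_iff₀ h3 h2]
      nlinarith
    calc |term n| = |iteratedDeriv n (fun s : ℝ => Real.exp (-1 / s ^ (2 * k))) t|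
          / ((2 * n).factorial : ℝ) * (x ^ 2) ^ n := by
          rw [hterm_def]
          rw [abs_mul, abs_div, abs_of_pos h3, pow_mul, _root_.abs_of_nonneg (pow_nonneg (sq_nonneg x) n)]
      _ ≤ (n.factorial * M / (ε * t) ^ n) / ((2 * n).factorial : ℝ) * (x ^ 2) ^ n := by
          gcongr
          exact real_deriv_bound k hε hε1 hE ht n
      _ = ((n.factorial : ℝ) / (2 * n).factorial) * (M * ((x ^ 2) ^ n / (ε * t) ^ n)) := by
          ring
      _ ≤ (1 / n.factorial) * (M * ((x ^ 2) ^ n / (ε * t) ^ n)) := by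
          apply mul_le_mul_of_nonneg_right hkey
          positivity
      _ = a ^ n / n.factorial * M := by
          rw [ha, div_pow]
          ring
  have hsum_b : Summable (fun n : ℕ => a ^ n / n.factorial * M) :=
    (Real.summable_pow_div_factorial a).mul_right M
  have hsum_abs : Summable (fun n => |term n|) :=
    Summable.of_nonneg_of_le (fun n => abs_nonneg _) hterm hsum_b
  have h1 : |∑' n, term n| ≤ ∑' n, |term n| := by
    have := norm_tsum_le_tsum_norm (f := term)
      (by simpa only [Real.norm_eq_abs] using hsum_abs)
    simpa only [Real.norm_eq_abs] using this
  refine h1.trans ((Summable.tsum_le_tsum hterm hsum_abs hsum_b).trans ?_)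
  rw [tsum_mul_right]
  apply mul_le_mul_of_nonneg_right _ hM0
  have : Real.exp a = ∑' n : ℕ, a ^ n / n.factorial := by
    rw [Real.exp_eq_exp_ℝ, NormedSpace.exp_eq_tsum_div]
  rw [this]

theorem tychonoff_solution_distributional_limit_zero (k : ℕ) (hk : 1 ≤ k)
    (u : ℝ → ℝ → ℝ)
    (hu : u = fun x t => ∑' n : ℕ,
        iteratedDeriv n (fun s : ℝ => Real.exp (-1 / s ^ (2 * k))) t
          / ((2 * n).factorial : ℝ) * x ^ (2 * n)) :
    ∀ φ : ℝ → ℝ, Continuous φ → HasCompactSupport φ →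
      Filter.Tendsto (fun t : ℝ => ∫ x : ℝ, u x t * φ x)
        (nhdsWithin 0 (Set.Ioi 0)) (nhds 0) := by
  intro φ hφc hφs
  obtain ⟨ε, hε0, hε1, hE⟩ := exists_eps k
  obtain ⟨R0, hR0⟩ := hφs.isBounded.subset_closedBall 0
  set R : ℝ := max R0 1 with hRdef
  have hR1 : (1:ℝ) ≤ R := le_max_right _ _
  have hsupp : tsupport φ ⊆ Metric.closedBall 0 R :=
    hR0.trans (Metric.closedBall_subset_closedBall (le_max_left _ _))
  have hφint : Integrable φ := hφc.integrable_of_hasCompactSupport hφs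
  set C : ℝ := ∫ x, |φ x| with hC
  set g : ℝ → ℝ := fun t => Real.exp (R^2/(ε*t) + -(1/2) * (t^(2*k))⁻¹) * C with hg
  have hbound : ∀ t ∈ Set.Ioi (0:ℝ), ‖∫ x, u x t * φ x‖ ≤ g t := by
    intro t ht
    rw [Set.mem_Ioi] at ht
    have key : ∀ x : ℝ, ‖u x t * φ x‖
        ≤ Real.exp (R^2/(ε*t) + -(1/2)*(t^(2*k))⁻¹) * |φ x| := by
      intro x
      rw [norm_mul, Real.norm_eq_abs, Real.norm_eq_abs]
      by_cases hx : x ∈ tsupport φ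
      · have hxR : |x| ≤ R := by
          have := hsupp hx
          simpa [Metric.mem_closedBall, Real.dist_eq] using this
        have h1 : |u x t| ≤ Real.exp (x^2/(ε*t)) * Real.exp (-(1/2)*(t^(2*k))⁻¹) := by
          rw [hu]; exact u_bound k hε0 hε1 hE ht x
        have hsq : x^2 ≤ R^2 := by
          have := abs_le.mp hxR
          nlinarith
        have h2 : Real.exp (x^2/(ε*t)) ≤ Real.exp (R^2/(ε*t)) := by
          apply Real.exp_le_exp.mpr
          gcongr
        calc |u x t| * |φ x|
            ≤ (Real.exp (R^2/(ε*t)) * Real.exp (-(1/2)*(t^(2*k))⁻¹)) * |φ x| := by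
              apply mul_le_mul_of_nonneg_right _ (abs_nonneg _)
              exact h1.trans (mul_le_mul_of_nonneg_right h2 (Real.exp_nonneg _))
          _ = Real.exp (R^2/(ε*t) + -(1/2)*(t^(2*k))⁻¹) * |φ x| := by
              rw [Real.exp_add]
      · have hz : φ x = 0 := image_eq_zero_of_notMem_tsupport hx
        rw [hz, abs_zero, mul_zero, mul_zero]
    calc ‖∫ x, u x t * φ x‖ ≤ ∫ x, ‖u x t * φ x‖ := norm_integral_le_integral_norm _
      _ ≤ ∫ x, Real.exp (R^2/(ε*t) + -(1/2)*(t^(2*k))⁻¹) * |φ x| :=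
          integral_mono_of_nonneg (Filter.Eventually.of_forall fun x => norm_nonneg _)
            (hφint.abs.const_mul _) (Filter.Eventually.of_forall key)
      _ = g t := by rw [hg, MeasureTheory.integral_const_mul]
  have hA : Tendsto (fun t : ℝ => R^2/(ε*t) + -(1/2) * (t^(2*k))⁻¹)
      (nhdsWithin 0 (Set.Ioi 0)) atBot := by
    have hinv : Tendsto (fun t : ℝ => t⁻¹) (nhdsWithin 0 (Set.Ioi 0)) atTop :=
      tendsto_inv_nhdsGT_zero
    have hq : 2 * k - 1 ≠ 0 := by omega
    have hin : Tendsto (fun y : ℝ => R^2/ε + -((1/2) * y^(2*k-1))) atTop atBot := by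
      apply tendsto_atBot_add_const_left
      apply tendsto_neg_atTop_atBot.comp
      exact (tendsto_pow_atTop hq).const_mul_atTop (by norm_num)
    have h2 : Tendsto (fun y : ℝ => y * (R^2/ε + -((1/2) * y^(2*k-1)))) atTop atBot :=
      tendsto_id.atTop_mul_atBot₀ hin
    apply Tendsto.congr' ?_ (h2.comp hinv)
    filter_upwards [self_mem_nhdsWithin] with t ht
    rw [Set.mem_Ioi] at ht
    have h2k : 2*k - 1 + 1 = 2*k := by omega
    have hpow : t⁻¹ * (t⁻¹)^(2*k-1) = (t^(2*k))⁻¹ := by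
      rw [← pow_succ', h2k, inv_pow]
    have ht0 : t ≠ 0 := ht.ne'
    simp only [Function.comp_apply]
    rw [mul_add]
    congr 1
    · field_simp
    · rw [mul_neg, ← mul_assoc, mul_comm (t⁻¹) ((1:ℝ)/2), mul_assoc, hpow]
      ring
  have hg0 : Tendsto g (nhdsWithin 0 (Set.Ioi 0)) (nhds 0) := by
    rw [hg]
    have := (Real.tendsto_exp_atBot.comp hA).mul_const C
    simpa using this
  apply squeeze_zero_norm' ?_ hg0
  filter_upwards [self_mem_nhdsWithin] with t ht using hbound t ht
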